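/- Let m ≥ 2 and let y = Π ∘ f_m^II where Π(t,x,y,z) = (x,y,z)/(t + √(2t²+1)). Suppose (z_j) = (r_j e^{iθ_j}) is a sequence with r_j > 0, θ_j in a fixed sector Ω_k (so cos mθ_j has constant sign (−1)^k and is bounded away from 0), and r_j → 0 or r_j → ∞. Then the first two components of y(z_j) tend to 0 and the third component tends to one of ±(√2 − 1) or ±(√2 + 1); hence every limit point of the image of f_m^II on the boundary of D³ is one of the four points (0,0,±(√2−1)), (0,0,±(√2+1)). -/

import Mathlib

noncomputable def x0II (m : ℕ) (r θ : ℝ) : ℝ :=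
  ((1 - (m:ℝ)^2)/(4*m)) * (r + 1/r) * Real.cos (m*θ)

noncomputable def x3II (m : ℕ) (r θ : ℝ) : ℝ :=
  ((1 - (m:ℝ)^2)/(4*m)) * (r - 1/r) * Real.cos (m*θ)

noncomputable def x1II (m : ℕ) (θ : ℝ) : ℝ :=
  -((((m:ℝ)^2 + 1) * Real.cos (m*θ) * Real.cos θ
     + 2*(m:ℝ) * Real.sin (m*θ) * Real.sin θ) / (2*m))

noncomputable def x2II (m : ℕ) (θ : ℝ) : ℝ :=
  -((((m:ℝ)^2 + 1) * Real.cos (m*θ) * Real.sin θ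
     - 2*(m:ℝ) * Real.sin (m*θ) * Real.cos θ) / (2*m))

/-- The hollowball projection Π. -/
noncomputable def hollowPi (p : ℝ × ℝ × ℝ × ℝ) : ℝ × ℝ × ℝ :=
  (p.2.1 / (p.1 + Real.sqrt (2*p.1^2 + 1)),
   p.2.2.1 / (p.1 + Real.sqrt (2*p.1^2 + 1)),
   p.2.2.2 / (p.1 + Real.sqrt (2*p.1^2 + 1)))

section AuxStmt19
open Filter Real

noncomputable def Dfun (x : ℝ) : ℝ := x + Real.sqrt (2*x^2+1)


lemma Dpos (x : ℝ) : 0 < Dfun x := by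
  have h1 : |x| < Real.sqrt (2*x^2+1) := by
    have h := Real.sqrt_lt_sqrt (sq_nonneg x) (by nlinarith : x^2 < 2*x^2+1)
    rwa [Real.sqrt_sq_eq_abs] at h
  have h2 := neg_abs_le x
  unfold Dfun; linarith

lemma Dbig (x : ℝ) : |x| ≤ 4 * Dfun x := by
  have hs0 : 0 ≤ Real.sqrt (2*x^2+1) := Real.sqrt_nonneg _
  have hs2 : (Real.sqrt (2*x^2+1))^2 = 2*x^2+1 := Real.sq_sqrt (by positivity)
  have h5 : 5 * |x| ≤ 4 * Real.sqrt (2*x^2+1) := by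
    nlinarith [sq_abs x, abs_nonneg x]
  have h2 := neg_abs_le x
  unfold Dfun; linarith

lemma invD_atTop : Tendsto (fun x => 1 / Dfun x) atTop (nhds 0) := by
  apply squeeze_zero_norm' (a := fun x => 4 / |x|)
  · filter_upwards [eventually_gt_atTop (0:ℝ)] with x hx
    rw [Real.norm_eq_abs, abs_of_pos (one_div_pos.mpr (Dpos x))]
    rw [div_le_div_iff₀ (Dpos x) (abs_pos.mpr hx.ne')]
    have := Dbig x; linarith
  · exact Tendsto.div_atTop tendsto_const_nhds tendsto_abs_atTop_atTop

lemma invD_atBot : Tendsto (fun x => 1 / Dfun x) atBot (nhds 0) := by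
  apply squeeze_zero_norm' (a := fun x => 4 / |x|)
  · filter_upwards [eventually_lt_atBot (0:ℝ)] with x hx
    rw [Real.norm_eq_abs, abs_of_pos (one_div_pos.mpr (Dpos x))]
    rw [div_le_div_iff₀ (Dpos x) (abs_pos.mpr hx.ne)]
    have := Dbig x; linarith
  · exact Tendsto.div_atTop tendsto_const_nhds tendsto_abs_atBot_atTop


lemma sqrt_split {x : ℝ} (h : x ≠ 0) : Real.sqrt (2*x^2+1) = |x| * Real.sqrt (2 + 1/x^2) := by
  rw [← Real.sqrt_sq_eq_abs, ← Real.sqrt_mul (sq_nonneg x)]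
  congr 1; field_simp

lemma aux_lim : Tendsto (fun x : ℝ => Real.sqrt (2 + 1/x^2)) (Filter.comap abs atTop) (nhds (Real.sqrt 2)) := by
  have h1 : Tendsto (fun x : ℝ => 1/x^2) (Filter.comap abs atTop) (nhds 0) := by
    have : Tendsto (fun x : ℝ => x^2) (Filter.comap abs atTop) atTop := by
      have habs : Tendsto (abs : ℝ → ℝ) (Filter.comap abs atTop) atTop := tendsto_comap
      have := (tendsto_pow_atTop (two_ne_zero)).comp habs
      refine this.congr fun x => ?_
      simp [sq_abs]
    exact Tendsto.div_atTop tendsto_const_nhds this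
  have h2 : Tendsto (fun x : ℝ => 2 + 1/x^2) (Filter.comap abs atTop) (nhds 2) := by
    simpa using h1.const_add 2
  exact (Real.continuous_sqrt.tendsto 2).comp h2

lemma inv_1add : 1 / (1 + Real.sqrt 2) = Real.sqrt 2 - 1 := by
  have h2 : Real.sqrt 2 ^ 2 = 2 := Real.sq_sqrt (by norm_num)
  have hne : (1 + Real.sqrt 2) ≠ 0 := by positivity
  rw [div_eq_iff hne]; nlinarith

lemma inv_1sub : 1 / (1 - Real.sqrt 2) = -(Real.sqrt 2 + 1) := by
  have h2 : Real.sqrt 2 ^ 2 = 2 := Real.sq_sqrt (by norm_num)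
  have hlt : (1:ℝ) < Real.sqrt 2 := by nlinarith [Real.sqrt_nonneg 2]
  have hne : (1 - Real.sqrt 2) ≠ 0 := by intro h; nlinarith
  rw [div_eq_iff hne]; nlinarith

lemma g_atTop : Tendsto (fun x => x / Dfun x) atTop (nhds (Real.sqrt 2 - 1)) := by
  have key : Tendsto (fun x : ℝ => 1/(1 + Real.sqrt (2 + 1/x^2))) atTop (nhds (Real.sqrt 2 - 1)) := by
    rw [← inv_1add]
    have hs : Tendsto (fun x : ℝ => Real.sqrt (2 + 1/x^2)) atTop (nhds (Real.sqrt 2)) :=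
      aux_lim.comp (tendsto_comap_iff.mpr (by exact tendsto_abs_atTop_atTop))
    have : Tendsto (fun x : ℝ => 1 + Real.sqrt (2 + 1/x^2)) atTop (nhds (1 + Real.sqrt 2)) := by
      simpa using hs.const_add 1
    simpa [one_div] using this.inv₀ (by positivity)
  refine key.congr' ?_
  filter_upwards [eventually_gt_atTop (0:ℝ)] with x hx
  have hsq : Real.sqrt (2*x^2+1) = x * Real.sqrt (2 + 1/x^2) := by
    rw [sqrt_split hx.ne', abs_of_pos hx]
  have hD : Dfun x = x * (1 + Real.sqrt (2 + 1/x^2)) := by unfold Dfun; rw [hsq]; ring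
  have hpos : (0:ℝ) < 1 + Real.sqrt (2 + 1/x^2) := by positivity
  rw [hD]; field_simp

lemma g_atBot : Tendsto (fun x => x / Dfun x) atBot (nhds (-(Real.sqrt 2 + 1))) := by
  have key : Tendsto (fun x : ℝ => 1/(1 - Real.sqrt (2 + 1/x^2))) atBot (nhds (-(Real.sqrt 2 + 1))) := by
    rw [← inv_1sub]
    have hs : Tendsto (fun x : ℝ => Real.sqrt (2 + 1/x^2)) atBot (nhds (Real.sqrt 2)) :=
      aux_lim.comp (tendsto_comap_iff.mpr (by exact tendsto_abs_atBot_atTop))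
    have h1 : Tendsto (fun x : ℝ => 1 - Real.sqrt (2 + 1/x^2)) atBot (nhds (1 - Real.sqrt 2)) := by
      simpa using (hs.const_sub 1)
    have hne : (1 - Real.sqrt 2) ≠ 0 := by
      have h2 : Real.sqrt 2 ^ 2 = 2 := Real.sq_sqrt (by norm_num)
      intro h; nlinarith [Real.sqrt_nonneg 2]
    simpa [one_div] using h1.inv₀ hne
  refine key.congr' ?_
  filter_upwards [eventually_lt_atBot (0:ℝ)] with x hx
  have hsq : Real.sqrt (2*x^2+1) = -x * Real.sqrt (2 + 1/x^2) := by
    rw [sqrt_split hx.ne, abs_of_neg hx]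
  have hD : Dfun x = x * (1 - Real.sqrt (2 + 1/x^2)) := by unfold Dfun; rw [hsq]; ring
  have hne2 : 1 - Real.sqrt (2 + 1/x^2) ≠ 0 := by
    have h1 : Real.sqrt 2 ≤ Real.sqrt (2 + 1/x^2) := Real.sqrt_le_sqrt (le_add_of_nonneg_right (by positivity))
    have h2 : (1:ℝ) < Real.sqrt 2 := by
      nlinarith [Real.sq_sqrt (show (0:ℝ) ≤ 2 by norm_num), Real.sqrt_nonneg 2]
    intro h; nlinarith
  rw [hD]; field_simp
  exact (div_self hx.ne).symm

lemma x1bound (m : ℕ) (hm : (1:ℝ) ≤ (m:ℝ)) (φ : ℝ) :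
    |(-((((m:ℝ)^2 + 1) * Real.cos (m*φ) * Real.cos φ
     + 2*(m:ℝ) * Real.sin (m*φ) * Real.sin φ) / (2*m)))| ≤ ((m:ℝ)^2+1+2*m)/(2*m) := by
  have hm0 : (0:ℝ) < 2*(m:ℝ) := by linarith
  rw [abs_neg, abs_div, abs_of_pos hm0]
  have hA : |(((m:ℝ)^2+1) * Real.cos (m*φ) * Real.cos φ)| ≤ (m:ℝ)^2+1 := by
    rw [abs_mul, abs_mul, abs_of_pos (by positivity : (0:ℝ) < (m:ℝ)^2+1)]
    calc ((m:ℝ)^2+1) * |Real.cos (m*φ)| * |Real.cos φ| ≤ ((m:ℝ)^2+1) * 1 * 1 := by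
          gcongr <;> first | exact Real.abs_cos_le_one _ | positivity
      _ = (m:ℝ)^2+1 := by ring
  have hB : |(2*(m:ℝ) * Real.sin (m*φ) * Real.sin φ)| ≤ 2*(m:ℝ) := by
    rw [abs_mul, abs_mul, abs_of_pos hm0]
    calc (2*(m:ℝ)) * |Real.sin (m*φ)| * |Real.sin φ| ≤ (2*(m:ℝ)) * 1 * 1 := by
          gcongr <;> first | exact Real.abs_sin_le_one _ | positivity
      _ = 2*(m:ℝ) := by ring
  have habs := abs_add_le (((m:ℝ)^2+1) * Real.cos (m*φ) * Real.cos φ)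
    (2*(m:ℝ) * Real.sin (m*φ) * Real.sin φ)
  gcongr
  linarith

lemma x2bound (m : ℕ) (hm : (1:ℝ) ≤ (m:ℝ)) (φ : ℝ) :
    |(-((((m:ℝ)^2 + 1) * Real.cos (m*φ) * Real.sin φ
     - 2*(m:ℝ) * Real.sin (m*φ) * Real.cos φ) / (2*m)))| ≤ ((m:ℝ)^2+1+2*m)/(2*m) := by
  have hm0 : (0:ℝ) < 2*(m:ℝ) := by linarith
  rw [abs_neg, abs_div, abs_of_pos hm0]
  have hA : |(((m:ℝ)^2+1) * Real.cos (m*φ) * Real.sin φ)| ≤ (m:ℝ)^2+1 := by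
    rw [abs_mul, abs_mul, abs_of_pos (by positivity : (0:ℝ) < (m:ℝ)^2+1)]
    calc ((m:ℝ)^2+1) * |Real.cos (m*φ)| * |Real.sin φ| ≤ ((m:ℝ)^2+1) * 1 * 1 := by
          gcongr <;> first | exact Real.abs_cos_le_one _ | exact Real.abs_sin_le_one _ | positivity
      _ = (m:ℝ)^2+1 := by ring
  have hB : |(2*(m:ℝ) * Real.sin (m*φ) * Real.cos φ)| ≤ 2*(m:ℝ) := by
    rw [abs_mul, abs_mul, abs_of_pos hm0]
    calc (2*(m:ℝ)) * |Real.sin (m*φ)| * |Real.cos φ| ≤ (2*(m:ℝ)) * 1 * 1 := by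
          gcongr <;> first | exact Real.abs_cos_le_one _ | exact Real.abs_sin_le_one _ | positivity
      _ = 2*(m:ℝ) := by ring
  have habs := abs_sub (((m:ℝ)^2+1) * Real.cos (m*φ) * Real.sin φ)
    (2*(m:ℝ) * Real.sin (m*φ) * Real.cos φ)
  gcongr
  linarith

end AuxStmt19

open Filter in
/-- along any sequence staying in a fixed sector Ω_k (with
cos mθ_j bounded away from 0) with r_j → 0 or r_j → ∞, the first two
components of y = Π ∘ f_m^II tend to 0 and the third tends to one of
±(√2 − 1), ±(√2 + 1). -/
theorem stmt19 (m k : ℕ) (hm : 2 ≤ m) (hk : k < 2*m)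
    (r θ : ℕ → ℝ) (hr0 : ∀ j, 0 < r j)
    (hθ : ∀ j, (2*(k:ℝ) - 1) * Real.pi / (2*(m:ℝ)) < θ j ∧
               θ j < (2*(k:ℝ) + 1) * Real.pi / (2*(m:ℝ)))
    (hsep : ∃ ε > 0, ∀ j, ε ≤ |Real.cos ((m:ℝ) * θ j)|)
    (hlim : Tendsto r atTop (nhds 0) ∨ Tendsto r atTop atTop) :
    Tendsto (fun j => (hollowPi (x0II m (r j) (θ j), x1II m (θ j),
                                 x2II m (θ j), x3II m (r j) (θ j))).1)
      atTop (nhds 0) ∧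
    Tendsto (fun j => (hollowPi (x0II m (r j) (θ j), x1II m (θ j),
                                 x2II m (θ j), x3II m (r j) (θ j))).2.1)
      atTop (nhds 0) ∧
    ∃ c : ℝ, (c = Real.sqrt 2 - 1 ∨ c = -(Real.sqrt 2 - 1) ∨
              c = Real.sqrt 2 + 1 ∨ c = -(Real.sqrt 2 + 1)) ∧
      Tendsto (fun j => (hollowPi (x0II m (r j) (θ j), x1II m (θ j),
                                   x2II m (θ j), x3II m (r j) (θ j))).2.2)
        atTop (nhds c) := by
  obtain ⟨ε, hε0, hεb⟩ := hsep
  have hm2 : (2:ℝ) ≤ (m:ℝ) := by exact_mod_cast hm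
  have hmpos : (0:ℝ) < (m:ℝ) := by linarith
  set a : ℝ := (1 - (m:ℝ)^2)/(4*(m:ℝ)) with ha_def
  have ha : a < 0 := div_neg_of_neg_of_pos (by nlinarith) (by linarith)
  set s : ℝ := (-1:ℝ)^k with hs_def
  have hss : s * s = 1 := by
    rw [hs_def, ← pow_add, ← two_mul, pow_mul]; norm_num
  -- sign of cos in the sector
  have hsc : ∀ j, 0 < s * Real.cos ((m:ℝ) * θ j) := by
    intro j
    obtain ⟨h1, h2⟩ := hθ j
    have hπ := Real.pi_pos
    rw [div_lt_iff₀ (by linarith : (0:ℝ) < 2*(m:ℝ))] at h1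
    rw [lt_div_iff₀ (by linarith : (0:ℝ) < 2*(m:ℝ))] at h2
    have hmem : (m:ℝ) * θ j - (k:ℝ)*Real.pi ∈ Set.Ioo (-(Real.pi/2)) (Real.pi/2) := by
      constructor <;> [nlinarith; nlinarith]
    have hc := Real.cos_pos_of_mem_Ioo hmem
    have hcos := Real.cos_add_nat_mul_pi ((m:ℝ) * θ j - (k:ℝ)*Real.pi) k
    rw [sub_add_cancel] at hcos
    rw [hcos, ← mul_assoc, ← hs_def, hss, one_mul]
    exact hc
  have hεs : ∀ j, ε ≤ s * Real.cos ((m:ℝ) * θ j) := by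
    intro j
    have h1 := hεb j
    have h2 := hsc j
    have habs : |s * Real.cos ((m:ℝ) * θ j)| = s * Real.cos ((m:ℝ) * θ j) :=
      abs_of_pos h2
    rw [abs_mul, hs_def, abs_pow, abs_neg, abs_one, one_pow, one_mul] at habs
    rw [← habs]; exact h1
  -- limits of u and sigma
  have key : Tendsto (fun j => r j + 1/(r j)) atTop atTop ∧
      ∃ S : ℝ, (S = 1 ∨ S = -1) ∧
        Tendsto (fun j => (r j - 1/(r j))/(r j + 1/(r j))) atTop (nhds S) := by
    rcases hlim with hr | hr
    · constructor
      · have h1r : Tendsto (fun j => 1/(r j)) atTop atTop := by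
          have hrw : Tendsto r atTop (nhdsWithin 0 (Set.Ioi 0)) :=
            tendsto_nhdsWithin_iff.mpr ⟨hr, Eventually.of_forall fun j => hr0 j⟩
          simpa [one_div, Function.comp_def] using tendsto_inv_nhdsGT_zero.comp hrw
        exact tendsto_atTop_mono (fun j => le_add_of_nonneg_left (hr0 j).le) h1r
      · refine ⟨-1, Or.inr rfl, ?_⟩
        have heq : ∀ j, (r j - 1/(r j))/(r j + 1/(r j)) = ((r j)^2 - 1)/((r j)^2 + 1) := by
          intro j
          have h0 := (hr0 j).ne'
          rw [div_eq_div_iff (by have := hr0 j; positivity) (by positivity)]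
          field_simp
        have hr2 : Tendsto (fun j => (r j)^2) atTop (nhds 0) := by
          simpa using hr.pow 2
        have := (hr2.sub_const 1).div (hr2.add_const 1) (by norm_num)
        simp only [zero_sub, zero_add, div_one] at this
        exact this.congr fun j => (heq j).symm
    · constructor
      · exact tendsto_atTop_mono
          (fun j => le_add_of_nonneg_right (by have := hr0 j; positivity)) hr
      · refine ⟨1, Or.inl rfl, ?_⟩
        have heq : ∀ j, (r j - 1/(r j))/(r j + 1/(r j))
            = (1 - 1/(r j)^2)/(1 + 1/(r j)^2) := by
          intro j
          have h0 := (hr0 j).ne'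
          rw [div_eq_div_iff (by have := hr0 j; positivity) (by have := hr0 j; positivity)]
          field_simp
        have hr2 : Tendsto (fun j => 1/(r j)^2) atTop (nhds 0) :=
          Tendsto.div_atTop tendsto_const_nhds ((tendsto_pow_atTop (two_ne_zero (α := ℕ))).comp hr)
        have hc1 : Tendsto (fun _ : ℕ => (1:ℝ)) atTop (nhds 1) := tendsto_const_nhds
        have := (hc1.sub hr2).div (hc1.add hr2) (by norm_num)
        simp only [sub_zero, add_zero, div_one] at this
        exact this.congr fun j => (heq j).symm
  obtain ⟨hu, S, hScase, hσ⟩ := key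
  -- x0 tendsto
  have hx0eq : ∀ j, x0II m (r j) (θ j)
      = (a*s) * ((s * Real.cos ((m:ℝ) * θ j)) * (r j + 1/(r j))) := by
    intro j
    have : (a*s) * ((s * Real.cos ((m:ℝ) * θ j)) * (r j + 1/(r j)))
        = (s*s) * (a * (r j + 1/(r j)) * Real.cos ((m:ℝ) * θ j)) := by ring
    rw [this, hss, one_mul]
    simp only [x0II, ha_def]
  have hv : Tendsto (fun j => (s * Real.cos ((m:ℝ) * θ j)) * (r j + 1/(r j))) atTop atTop := by
    refine tendsto_atTop_mono (fun j => ?_) (hu.const_mul_atTop hε0)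
    have hu0 : 0 ≤ r j + 1/(r j) := by have := hr0 j; positivity
    exact mul_le_mul_of_nonneg_right (hεs j) hu0
  -- combined limits for x0/D and 1/D
  have keyL : ∃ L : ℝ, (L = Real.sqrt 2 - 1 ∨ L = -(Real.sqrt 2 + 1)) ∧
      Tendsto (fun j => x0II m (r j) (θ j) / Dfun (x0II m (r j) (θ j))) atTop (nhds L) ∧
      Tendsto (fun j => 1 / Dfun (x0II m (r j) (θ j))) atTop (nhds 0) := by
    rcases Nat.even_or_odd k with hke | hko
    · have hs1 : s = 1 := by rw [hs_def]; exact hke.neg_one_pow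
      have hb : a * s < 0 := by rw [hs1, mul_one]; exact ha
      have hx0 : Tendsto (fun j => x0II m (r j) (θ j)) atTop atBot :=
        (hv.const_mul_atTop_of_neg hb).congr fun j => (hx0eq j).symm
      refine ⟨-(Real.sqrt 2 + 1), Or.inr rfl, ?_, ?_⟩
      · simpa [Function.comp_def] using g_atBot.comp hx0
      · simpa [Function.comp_def] using invD_atBot.comp hx0
    · have hs1 : s = -1 := by rw [hs_def]; exact hko.neg_one_pow
      have hb : 0 < a * s := by rw [hs1]; nlinarith
      have hx0 : Tendsto (fun j => x0II m (r j) (θ j)) atTop atTop :=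
        (hv.const_mul_atTop hb).congr fun j => (hx0eq j).symm
      refine ⟨Real.sqrt 2 - 1, Or.inl rfl, ?_, ?_⟩
      · simpa [Function.comp_def] using g_atTop.comp hx0
      · simpa [Function.comp_def] using invD_atTop.comp hx0
  obtain ⟨L, hLcase, hgL, hinvL⟩ := keyL
  have hBtend : Tendsto (fun j => (((m:ℝ)^2+1+2*m)/(2*(m:ℝ))) * (1/Dfun (x0II m (r j) (θ j))))
      atTop (nhds 0) := by
    simpa using hinvL.const_mul (((m:ℝ)^2+1+2*m)/(2*(m:ℝ)))
  have hm1 : (1:ℝ) ≤ (m:ℝ) := by linarith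
  refine ⟨?_, ?_, ?_⟩
  · have key1 : Tendsto (fun j => x1II m (θ j) / Dfun (x0II m (r j) (θ j))) atTop (nhds 0) := by
      apply squeeze_zero_norm _ hBtend
      intro j
      have hD := Dpos (x0II m (r j) (θ j))
      have hb1 : |x1II m (θ j)| ≤ ((m:ℝ)^2+1+2*m)/(2*(m:ℝ)) := by
        simpa only [x1II] using x1bound m hm1 (θ j)
      rw [Real.norm_eq_abs, abs_div, abs_of_pos hD, mul_one_div]
      exact (div_le_div_iff_of_pos_right hD).mpr hb1
    simpa only [hollowPi, Dfun] using key1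
  · have key2 : Tendsto (fun j => x2II m (θ j) / Dfun (x0II m (r j) (θ j))) atTop (nhds 0) := by
      apply squeeze_zero_norm _ hBtend
      intro j
      have hD := Dpos (x0II m (r j) (θ j))
      have hb2 : |x2II m (θ j)| ≤ ((m:ℝ)^2+1+2*m)/(2*(m:ℝ)) := by
        simpa only [x2II] using x2bound m hm1 (θ j)
      rw [Real.norm_eq_abs, abs_div, abs_of_pos hD, mul_one_div]
      exact (div_le_div_iff_of_pos_right hD).mpr hb2
    simpa only [hollowPi, Dfun] using key2
  · refine ⟨S * L, ?_, ?_⟩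
    · rcases hScase with rfl | rfl <;> rcases hLcase with rfl | rfl
      · exact Or.inl (one_mul _)
      · exact Or.inr (Or.inr (Or.inr (one_mul _)))
      · exact Or.inr (Or.inl (neg_one_mul _))
      · exact Or.inr (Or.inr (Or.inl (by ring)))
    · have heq3 : ∀ j, x3II m (r j) (θ j) / Dfun (x0II m (r j) (θ j))
          = ((r j - 1/(r j))/(r j + 1/(r j)))
            * (x0II m (r j) (θ j) / Dfun (x0II m (r j) (θ j))) := by
        intro j
        have hu0 : (0:ℝ) < r j + 1/(r j) := by have := hr0 j; positivity
        have hx3 : x3II m (r j) (θ j)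
            = ((r j - 1/(r j))/(r j + 1/(r j))) * x0II m (r j) (θ j) := by
          simp only [x3II, x0II]
          field_simp
        rw [hx3, mul_div_assoc]
      have := hσ.mul hgL
      have key3 : Tendsto (fun j => x3II m (r j) (θ j) / Dfun (x0II m (r j) (θ j)))
          atTop (nhds (S * L)) := this.congr fun j => (heq3 j).symm
      simpa only [hollowPi, Dfun] using key3
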